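/- Let X, Y be metric spaces, f : X → Y a surjective map with metrically parallel fibers that is 1-Lipschitz (d(f(x),f(x')) ≤ d(x,x')). Then for any nonprincipal ultrafilter ω, f induces a well-defined 1-Lipschitz surjective map F : Cone(X,ω) → Cone(Y,ω) which again has metrically parallel fibers. -/

import Mathlib

open Filter

/-- The asymptotic precone of `X` (with basepoint `x₀`): linearly bounded sequences in `X`.
The ultrafilter `ω` is a parameter fixing the ultralimit semi-distance. -/
def Precone (X : Type*) [MetricSpace X] (ω : Ultrafilter ℕ) (x₀ : X) : Type _ :=
  {u : ℕ → X // ∃ C : ℝ, ∀ n : ℕ, dist (u n) x₀ ≤ C * (n + 1)}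

namespace Precone

variable {X : Type*} [MetricSpace X] {ω : Ultrafilter ℕ} {x₀ : X}

/-- The ultralimit semi-distance `lim_ω d(u_n, v_n)/n`. -/
noncomputable def preDist (ω : Ultrafilter ℕ) (u v : ℕ → X) : ℝ :=
  limUnder (ω : Filter ℕ) (fun n : ℕ => dist (u n) (v n) / n)

theorem bounded (u v : Precone X ω x₀) :
    ∃ K : ℝ, ∀ n : ℕ, (fun n : ℕ => dist (u.1 n) (v.1 n) / n) n ∈ Set.Icc (0 : ℝ) K := by
  obtain ⟨Cu, hu⟩ := u.2
  obtain ⟨Cv, hv⟩ := v.2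
  refine ⟨2 * (Cu + Cv), fun n => ⟨by positivity, ?_⟩⟩
  have hCu : 0 ≤ Cu := by have := hu 0; have := dist_nonneg (x := u.1 0) (y := x₀); nlinarith
  have hCv : 0 ≤ Cv := by have := hv 0; have := dist_nonneg (x := v.1 0) (y := x₀); nlinarith
  rcases Nat.eq_zero_or_pos n with h | h
  · simp [h]; positivity
  · have hn : (0 : ℝ) < n := by exact_mod_cast h
    have h1 : dist (u.1 n) (v.1 n) ≤ (Cu + Cv) * (n + 1) := by
      calc dist (u.1 n) (v.1 n) ≤ dist (u.1 n) x₀ + dist (v.1 n) x₀ := dist_triangle_right _ _ _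
        _ ≤ Cu * (n + 1) + Cv * (n + 1) := add_le_add (hu n) (hv n)
        _ = (Cu + Cv) * (n + 1) := by ring
    rw [div_le_iff₀ hn]
    have h1n : (1 : ℝ) ≤ n := by exact_mod_cast h
    have h2 : ((n : ℝ) + 1) ≤ 2 * n := by nlinarith
    calc dist (u.1 n) (v.1 n) ≤ (Cu + Cv) * (n + 1) := h1
      _ ≤ (Cu + Cv) * (2 * n) := by nlinarith
      _ = 2 * (Cu + Cv) * n := by ring

theorem tendsto_preDist (u v : Precone X ω x₀) :
    Tendsto (fun n : ℕ => dist (u.1 n) (v.1 n) / n) ω (nhds (preDist ω u.1 v.1)) := by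
  obtain ⟨K, hK⟩ := bounded u v
  have hmem : (Ultrafilter.map (fun n : ℕ => dist (u.1 n) (v.1 n) / n) ω : Filter ℝ)
      ≤ Filter.principal (Set.Icc (0 : ℝ) K) := by
    rw [Ultrafilter.coe_map]
    refine le_principal_iff.mpr ?_
    exact Filter.mem_map.mpr (Filter.univ_mem' fun n => hK n)
  obtain ⟨a, -, ha⟩ := (isCompact_Icc (a := (0:ℝ)) (b := K)).ultrafilter_le_nhds
    (Ultrafilter.map (fun n : ℕ => dist (u.1 n) (v.1 n) / n) ω) hmem
  exact tendsto_nhds_limUnder ⟨a, ha⟩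

noncomputable instance : PseudoMetricSpace (Precone X ω x₀) where
  dist u v := preDist ω u.1 v.1
  dist_self u := by
    have h0 : Tendsto (fun n : ℕ => dist (u.1 n) (u.1 n) / n) ω (nhds 0) := by
      simpa using (tendsto_const_nhds : Tendsto (fun _ : ℕ => (0:ℝ)) ω (nhds 0))
    exact tendsto_nhds_unique (tendsto_preDist u u) h0
  dist_comm u v := by
    simp only [preDist, dist_comm]
  dist_triangle u v w := by
    refine le_of_tendsto_of_tendsto' (tendsto_preDist u w)
      ((tendsto_preDist u v).add (tendsto_preDist v w)) (fun n => ?_)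
    rcases Nat.eq_zero_or_pos n with h | h
    · simp [h]
    · have hn : (0 : ℝ) < n := by exact_mod_cast h
      rw [← add_div]
      exact div_le_div_of_nonneg_right (dist_triangle _ _ _) hn.le

end Precone

/-- The asymptotic cone of `X` with respect to `ω` and basepoint `x₀`: the metric quotient of
the precone by the vanishing of the ultralimit semi-distance. -/
def Cone (X : Type*) [MetricSpace X] (ω : Ultrafilter ℕ) (x₀ : X) : Type _ :=
  SeparationQuotient (Precone X ω x₀)

noncomputable instance (X : Type*) [MetricSpace X] (ω : Ultrafilter ℕ) (x₀ : X) :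
    MetricSpace (Cone X ω x₀) :=
  inferInstanceAs (MetricSpace (SeparationQuotient (Precone X ω x₀)))

/-- The class in the asymptotic cone of a linearly bounded sequence. -/
noncomputable def Cone.mk {X : Type*} [MetricSpace X] {ω : Ultrafilter ℕ} {x₀ : X}
    (u : Precone X ω x₀) : Cone X ω x₀ :=
  SeparationQuotient.mk u

/-- A surjective `1`-Lipschitz map `f : X → Y` with metrically parallel fibers induces a
well-defined surjective `1`-Lipschitz map `Cone(X,ω) → Cone(Y,ω)` which again has metrically
parallel fibers. -/
theorem cone_map_of_parallel_fibers
    (X Y : Type*) [MetricSpace X] [MetricSpace Y]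
    (f : X → Y) (hsurj : Function.Surjective f)
    (hlip : ∀ x x' : X, dist (f x) (f x') ≤ dist x x')
    (hpar : ∀ x y : X, ∃ z : X, f z = f y ∧ dist x z = dist (f x) (f z))
    (x₀ : X) (ω : Ultrafilter ℕ) (hω : (Filter.cofinite : Filter ℕ) ≤ ↑ω) :
    ∃ F : Cone X ω x₀ → Cone Y ω (f x₀),
      (∀ (u : Precone X ω x₀) (v : Precone Y ω (f x₀)),
        (∀ n : ℕ, v.1 n = f (u.1 n)) → F (Cone.mk u) = Cone.mk v) ∧
      (∀ a b : Cone X ω x₀, dist (F a) (F b) ≤ dist a b) ∧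
      Function.Surjective F ∧
      (∀ a b : Cone X ω x₀, ∃ c : Cone X ω x₀,
        F c = F b ∧ dist a c = dist (F a) (F c)) := by

  classical
  -- the composed sequence lies in the precone of `Y`
  have hcomp : ∀ u : Precone X ω x₀, ∃ C : ℝ, ∀ n : ℕ,
      dist (f (u.1 n)) (f x₀) ≤ C * (n + 1) := by
    intro u
    obtain ⟨C, hC⟩ := u.2
    exact ⟨C, fun n => le_trans (hlip _ _) (hC n)⟩
  set g : Precone X ω x₀ → Precone Y ω (f x₀) :=
    fun u => ⟨fun n => f (u.1 n), hcomp u⟩ with hg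
  -- key semidistance comparison
  have hkey : ∀ u v : Precone X ω x₀, dist (g u) (g v) ≤ dist u v := by
    intro u v
    refine le_of_tendsto_of_tendsto' (Precone.tendsto_preDist (g u) (g v))
      (Precone.tendsto_preDist u v) (fun n => ?_)
    rcases Nat.eq_zero_or_pos n with h | h
    · simp [h]
    · have hn : (0 : ℝ) < n := by exact_mod_cast h
      exact div_le_div_of_nonneg_right (hlip _ _) hn.le
  have hwd : ∀ u v : Precone X ω x₀, Inseparable u v →
      Cone.mk (g u) = Cone.mk (g v) := by
    intro u v h
    refine SeparationQuotient.mk_eq_mk.mpr (Metric.inseparable_iff.mpr ?_)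
    have h0 : dist u v = 0 := Metric.inseparable_iff.mp h
    have := hkey u v
    have := dist_nonneg (x := g u) (y := g v)
    linarith
  refine ⟨SeparationQuotient.lift (fun u => Cone.mk (g u)) hwd, ?_, ?_, ?_, ?_⟩
  · intro u v hv
    have : v = g u := Subtype.ext (funext fun n => hv n)
    simp [Cone.mk, this]
    rfl
  · intro a b
    obtain ⟨u, rfl⟩ := SeparationQuotient.surjective_mk a
    obtain ⟨v, rfl⟩ := SeparationQuotient.surjective_mk b
    exact (SeparationQuotient.dist_mk _ _).trans_le ((hkey u v).trans_eq (SeparationQuotient.dist_mk _ _).symm)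
  · intro b
    obtain ⟨v, rfl⟩ := SeparationQuotient.surjective_mk b
    -- lift the sequence using parallel fibers through `x₀`
    have hsel : ∀ n : ℕ, ∃ z : X, f z = v.1 n ∧ dist x₀ z = dist (f x₀) (f z) := by
      intro n
      obtain ⟨w, hw⟩ := hsurj (v.1 n)
      obtain ⟨z, hz1, hz2⟩ := hpar x₀ w
      exact ⟨z, hz1.trans hw, hz2⟩
    choose z hz1 hz2 using hsel
    obtain ⟨C, hC⟩ := v.2
    have hzbd : ∀ n : ℕ, dist (z n) x₀ ≤ C * (n + 1) := by
      intro n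
      rw [dist_comm, hz2 n, hz1 n, dist_comm]
      exact hC n
    refine ⟨SeparationQuotient.mk (⟨z, C, hzbd⟩ : Precone X ω x₀), ?_⟩
    have : g ⟨z, C, hzbd⟩ = v := Subtype.ext (funext fun n => hz1 n)
    simp [Cone.mk, this]
    exact congrArg SeparationQuotient.mk this
  · intro a b
    obtain ⟨u, rfl⟩ := SeparationQuotient.surjective_mk a
    obtain ⟨v, rfl⟩ := SeparationQuotient.surjective_mk b
    -- parallel fibers in the cone
    have hsel : ∀ n : ℕ, ∃ w : X, f w = f (v.1 n) ∧
        dist (u.1 n) w = dist (f (u.1 n)) (f w) := fun n => hpar (u.1 n) (v.1 n)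
    choose w hw1 hw2 using hsel
    obtain ⟨Cu, hCu⟩ := u.2
    obtain ⟨Cv, hCv⟩ := v.2
    have hwbd : ∀ n : ℕ, dist (w n) x₀ ≤ (2 * Cu + Cv) * (n + 1) := by
      intro n
      have h1 : dist (u.1 n) (w n) ≤ (Cu + Cv) * (n + 1) := by
        rw [hw2 n, hw1 n]
        calc dist (f (u.1 n)) (f (v.1 n))
            ≤ dist (f (u.1 n)) (f x₀) + dist (f x₀) (f (v.1 n)) := dist_triangle _ _ _
          _ ≤ dist (u.1 n) x₀ + dist x₀ (v.1 n) := by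
              gcongr
              · exact hlip _ _
              · rw [dist_comm, dist_comm x₀]
                exact hlip _ _
          _ ≤ Cu * (n + 1) + Cv * (n + 1) := by
              rw [dist_comm x₀]
              exact add_le_add (hCu n) (hCv n)
          _ = (Cu + Cv) * (n + 1) := by ring
      calc dist (w n) x₀ ≤ dist (w n) (u.1 n) + dist (u.1 n) x₀ := dist_triangle _ _ _
        _ ≤ (Cu + Cv) * (n + 1) + Cu * (n + 1) := by
            rw [dist_comm]; exact add_le_add h1 (hCu n)
        _ = (2 * Cu + Cv) * (n + 1) := by ring
    set c : Precone X ω x₀ := ⟨w, 2 * Cu + Cv, hwbd⟩ with hc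
    refine ⟨SeparationQuotient.mk c, ?_, ?_⟩
    · have : (g c).1 = (g v).1 := funext fun n => hw1 n
      have hgc : g c = g v := Subtype.ext this
      simp [Cone.mk, hgc]
      exact congrArg SeparationQuotient.mk hgc
    · have hdeq : (fun n : ℕ => dist (u.1 n) (c.1 n) / n)
          = fun n : ℕ => dist ((g u).1 n) ((g c).1 n) / n := by
        funext n
        simp only [hg, hc]
        rw [hw2 n]
      have h1 : dist (SeparationQuotient.mk u) (SeparationQuotient.mk c) = dist u c :=
        SeparationQuotient.dist_mk _ _
      have h2 : dist u c = dist (g u) (g c) := by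
        show Precone.preDist ω u.1 c.1 = Precone.preDist ω (g u).1 (g c).1
        unfold Precone.preDist
        rw [hdeq]
      simp only [Cone.mk, SeparationQuotient.lift_mk, SeparationQuotient.dist_mk, h1, h2]
      exact h1.trans (h2.trans (SeparationQuotient.dist_mk _ _).symm)
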